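/- (Derivative bounds for the profile function g, equation (3.7).) Let g(s) := s · ln(eᵉ − 1 − ln s) for s ∈ (0, e⁻¹]. Then g(e⁻¹) = 1, g is differentiable on (0, e⁻¹] with g'(s) = ln(eᵉ − 1 − ln s) − 1/(eᵉ − 1 − ln s), and for every s ∈ (0, e⁻¹] one has 1 < g'(s) < g(s)/s. -/

import Mathlib

open MeasureTheory Real Filter Set
open scoped ENNReal NNReal

noncomputable section

abbrev E3 : Type := EuclideanSpace ℝ (Fin 3)

/-- The vector `(a, b, c)` in `ℝ³`. -/
def vec3 (a b c : ℝ) : E3 := (WithLp.equiv 2 (Fin 3 → ℝ)).symm ![a, b, c]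

/-- Euclidean dot product in `ℝ³`. -/
def dot3 (x y : E3) : ℝ := x 0 * y 0 + x 1 * y 1 + x 2 * y 2

/-- Cross product in `ℝ³`. -/
def cross3 (x y : E3) : E3 :=
  vec3 (x 1 * y 2 - x 2 * y 1) (x 2 * y 0 - x 0 * y 2) (x 0 * y 1 - x 1 * y 0)

/-- The unit sphere `S²` in `ℝ³`. -/
def S2 : Set E3 := Metric.sphere (0 : E3) 1

/-- The surface measure on `S²`: the 2-dimensional Hausdorff measure restricted to `S²`. -/
def sigma2 : Measure E3 := (μH[2] : Measure E3).restrict S2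

/-- Spherical coordinates. -/
def sc (φ θ : ℝ) : E3 := vec3 (cos θ * cos φ) (cos θ * sin φ) (sin θ)

/-- The Biot–Savart velocity of a vorticity `ω` on the sphere. -/
def biotSavart (ω : E3 → ℝ) (x : E3) : E3 :=
  (2 * Real.pi)⁻¹ • ∫ y, (‖x - y‖ ^ 2)⁻¹ • ω y • cross3 x y ∂sigma2

/-- The unit tangent vector `e_φ`. -/
def ephi (y : E3) : E3 := vec3 (-(y 1) / sqrt (1 - (y 2) ^ 2)) (y 0 / sqrt (1 - (y 2) ^ 2)) 0

/-- The unit tangent vector `e_θ`. -/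
def etheta (y : E3) : E3 :=
  vec3 (-(y 2) * y 0 / sqrt (1 - (y 2) ^ 2)) (-(y 2) * y 1 / sqrt (1 - (y 2) ^ 2))
    (sqrt (1 - (y 2) ^ 2))

/-- Reflection in the second coordinate: `ỹ`. -/
def flip2 (y : E3) : E3 := vec3 (y 0) (-(y 1)) (y 2)

/-- Reflection in the third coordinate: `ȳ`. -/
def flip3 (y : E3) : E3 := vec3 (y 0) (y 1) (-(y 2))

/-- `ω` is odd-odd symmetric on the sphere. -/
def OddOdd (ω : E3 → ℝ) : Prop := ∀ x ∈ S2, ω (flip2 x) = -ω x ∧ ω (flip3 x) = -ω x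

def x₀ : E3 := vec3 1 0 0

/-- The region `Q(k₁, k₂)` on the sphere. -/
def Qset (k₁ k₂ : ℝ) : Set E3 :=
  (fun p : ℝ × ℝ => sc p.1 p.2) '' (Ioo k₁ Real.pi ×ˢ Ioo k₂ (Real.pi / 2))

/-- The open quarter sphere. -/
def S2q : Set E3 := {y ∈ S2 | 0 < y 1 ∧ 0 < y 2}

/-- The (possibly infinite) Lipschitz constant of `f` on the set `s`. -/
def lipOn (f : ℝ × ℝ → ℝ) (s : Set (ℝ × ℝ)) : ℝ≥0∞ :=
  ⨆ p ∈ s, ⨆ q ∈ s, edist (f p) (f q) / edist p q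

/-- Derivative bounds for the profile function `g`:
`g(e⁻¹) = 1`, `g` is differentiable on `(0, e⁻¹]` with
`g'(s) = ln(eᵉ − 1 − ln s) − 1/(eᵉ − 1 − ln s)`, and `1 < g'(s) < g(s)/s` there. -/
theorem profile_g_deriv_bounds :
    (fun s : ℝ => s * log (exp (exp 1) - 1 - log s)) (exp (-1)) = 1 ∧
    ∀ s ∈ Ioc (0 : ℝ) (exp (-1)),
      HasDerivWithinAt (fun s : ℝ => s * log (exp (exp 1) - 1 - log s))
        (log (exp (exp 1) - 1 - log s) - 1 / (exp (exp 1) - 1 - log s))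
        (Ioc (0 : ℝ) (exp (-1))) s ∧
      1 < log (exp (exp 1) - 1 - log s) - 1 / (exp (exp 1) - 1 - log s) ∧
      log (exp (exp 1) - 1 - log s) - 1 / (exp (exp 1) - 1 - log s) <
        (s * log (exp (exp 1) - 1 - log s)) / s := by
  constructor
  · simp only [Real.log_exp]
    have : Real.exp (Real.exp 1) - 1 - (-1) = Real.exp (Real.exp 1) := by ring
    rw [this, Real.log_exp, ← Real.exp_add]
    norm_num
  · intro s hs
    obtain ⟨hs0, hs1⟩ := hs
    set C : ℝ := Real.exp (Real.exp 1) - 1 with hC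
    have hlogs : Real.log s ≤ -1 := by
      calc Real.log s ≤ Real.log (Real.exp (-1)) :=
            Real.log_le_log hs0 hs1
        _ = -1 := Real.log_exp _
    have hu : Real.exp (Real.exp 1) ≤ C - Real.log s := by
      simp only [hC]; linarith
    have hupos : 0 < C - Real.log s := lt_of_lt_of_le (Real.exp_pos _) hu
    have hune : C - Real.log s ≠ 0 := ne_of_gt hupos
    have hlogu : Real.exp 1 ≤ Real.log (C - Real.log s) := by
      calc Real.exp 1 = Real.log (Real.exp (Real.exp 1)) := (Real.log_exp _).symm
        _ ≤ Real.log (C - Real.log s) := Real.log_le_log (Real.exp_pos _) hu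
    have hderiv : HasDerivAt (fun t : ℝ => t * Real.log (C - Real.log t))
        (Real.log (C - Real.log s) - 1 / (C - Real.log s)) s := by
      have h2 : HasDerivAt (fun t : ℝ => C - Real.log t) (-s⁻¹) s :=
        (Real.hasDerivAt_log hs0.ne').const_sub C
      have h3 : HasDerivAt (fun t : ℝ => Real.log (C - Real.log t))
          (-s⁻¹ / (C - Real.log s)) s := h2.log hune
      have h : HasDerivAt (fun t : ℝ => t * Real.log (C - Real.log t))
          (1 * Real.log (C - Real.log s) + s * (-s⁻¹ / (C - Real.log s))) s :=
        (hasDerivAt_id s).mul h3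
      convert h using 1
      field_simp
      ring
    refine ⟨hderiv.hasDerivWithinAt, ?_, ?_⟩
    · have h1 : 1 / (C - Real.log s) ≤ 1 / Real.exp (Real.exp 1) :=
        one_div_le_one_div_of_le (Real.exp_pos _) hu
      have h2 : 1 / Real.exp (Real.exp 1) < 1 := by
        rw [div_lt_one (Real.exp_pos _)]
        calc (1 : ℝ) = Real.exp 0 := Real.exp_zero.symm
          _ < Real.exp (Real.exp 1) := Real.exp_lt_exp.mpr (Real.exp_pos 1)
      have h3 : (2 : ℝ) < Real.exp 1 := by
        have := Real.exp_one_gt_d9; linarith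
      linarith
    · rw [mul_div_cancel_left₀ _ hs0.ne']
      have : 0 < 1 / (C - Real.log s) := by positivity
      linarith
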